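/- Let M₁, …, Mₙ be commutative monoids, let M = M₁ × ⋯ × Mₙ, and let θ be a monoid automorphism of M with inverse θ⁻¹. Then for all indices i, j, k with i ≠ j and all m_j ∈ M_j, the element θ_{ik}((θ⁻¹)_{kj}(m_j)) is a unit of M_i, and likewise (θ⁻¹)_{ik}(θ_{kj}(m_j)) is a unit of M_i. -/

import Mathlib

lemma stmt_8_aux {n : ℕ} {M : Fin n → Type*} [∀ i, CommMonoid (M i)]
    (θ : ((i : Fin n) → M i) ≃* ((i : Fin n) → M i))
    (i j k : Fin n) (hij : i ≠ j) (m : M j) :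
    IsUnit (θ (Pi.mulSingle k (θ.symm (Pi.mulSingle j m) k)) i) := by
  have hprod : ∏ l, θ (Pi.mulSingle l (θ.symm (Pi.mulSingle j m) l)) i = 1 := by
    rw [← Finset.prod_apply, ← map_prod]
    rw [Finset.univ_prod_mulSingle (θ.symm (Pi.mulSingle j m))]
    rw [θ.apply_symm_apply]
    exact Pi.mulSingle_eq_of_ne hij m
  exact IsUnit.of_mul_eq_one _
    ((Finset.mul_prod_erase Finset.univ _ (Finset.mem_univ k)).trans hprod)

/-- For a monoid automorphism `θ` of a finite direct product of commutative monoids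
and indices `i ≠ j` and any `k`, the elements `θ_{ik}((θ⁻¹)_{kj}(m_j))` and
`(θ⁻¹)_{ik}(θ_{kj}(m_j))` are units of `M i`. -/
theorem stmt_8 {n : ℕ} {M : Fin n → Type*} [∀ i, CommMonoid (M i)]
    (θ : ((i : Fin n) → M i) ≃* ((i : Fin n) → M i))
    (i j k : Fin n) (hij : i ≠ j) (m : M j) :
    IsUnit (θ (Pi.mulSingle k (θ.symm (Pi.mulSingle j m) k)) i) ∧
    IsUnit (θ.symm (Pi.mulSingle k (θ (Pi.mulSingle j m) k)) i) := by
  exact ⟨stmt_8_aux θ i j k hij m, stmt_8_aux θ.symm i j k hij m⟩
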